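/- For any sequence of positive weights π = (π_i)_{i≥1} (not necessarily summable), the GrowingHedge algorithm achieves, for every T ≥ 1 and every expert i ≤ M_T, the regret bound Σ_{t=τ_i}^T (ℓ_t − ℓ_{i,t}) ≤ (1/η) · log( (Σ_{j=1}^{M_T} π_j) / π_i ). -/

import Mathlib

private lemma sum_Icc_one_fin {α : Type*} [AddCommMonoid α] (N : ℕ) (f : ℕ → α) :
    ∑ i ∈ Finset.Icc 1 N, f i = ∑ i : Fin N, f (i + 1) := by
  rw [← Finset.Ico_add_one_right_eq_Icc, Finset.sum_Ico_eq_sum_range]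
  rw [Fin.sum_univ_eq_sum_range (fun i => f (i+1))]
  simp [add_comm]

/-- **GrowingHedge regret bound (Theorem 1).**
For any sequence of positive weights π (not necessarily summable), the GrowingHedge
algorithm achieves, for every T ≥ 1 and every expert i ≤ M_T,
Σ_{t=τ_i}^T (ℓ_t − ℓ_{i,t}) ≤ (1/η)·log( (Σ_{j=1}^{M_T} π_j) / π_i ). -/
theorem growingHedge_regret
    {E : Type*} [AddCommGroup E] [Module ℝ E] {Y : Type*}
    (X : Set E) (ℓ : E → Y → ℝ) (η : ℝ) (hη : 0 < η)
    (hexp : ∀ (yy : Y) (N : ℕ), 1 ≤ N → ∀ xs : Fin N → E, (∀ i, xs i ∈ X) →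
      ∀ vv : Fin N → ℝ, (∀ i, 0 ≤ vv i) → (∑ i, vv i) = 1 →
      ℓ (∑ i, vv i • xs i) yy ≤ -(1/η) * Real.log (∑ i, vv i * Real.exp (-η * ℓ (xs i) yy)))
    -- growing expert ensemble: M t experts at time t, nondecreasing, at least one
    (M : ℕ → ℕ) (hMpos : ∀ t, 1 ≤ t → 1 ≤ M t) (hMmono : Monotone M)
    -- τ i is the entry time of expert i : the least t ≥ 1 with i ≤ M t
    (τ : ℕ → ℕ)
    (hτ : ∀ i t, 1 ≤ i → 1 ≤ t → i ≤ M t → 1 ≤ τ i ∧ i ≤ M (τ i) ∧ τ i ≤ t)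
    (π : ℕ → ℝ) (hπpos : ∀ i, 1 ≤ i → 0 < π i)
    (xe : ℕ → ℕ → E) (hxe : ∀ i t, 1 ≤ t → 1 ≤ i → i ≤ M t → xe i t ∈ X)
    (y : ℕ → Y) (xl : ℕ → E) (w : ℕ → ℕ → ℝ)
    -- GrowingHedge weights: initialization, update, introduction of new experts
    (hw1 : ∀ i, 1 ≤ i → i ≤ M 1 → w i 1 = π i)
    (hwupd : ∀ t, 1 ≤ t → ∀ i, 1 ≤ i → i ≤ M t →
      w i (t+1) = w i t * Real.exp (-η * ℓ (xe i t) (y t)))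
    (hwnew : ∀ t, 1 ≤ t → ∀ i, M t + 1 ≤ i → i ≤ M (t+1) →
      w i (t+1) = π i * Real.exp (-η * ∑ s ∈ Finset.Icc 1 t, ℓ (xl s) (y s)))
    -- GrowingHedge prediction
    (hxl : ∀ t, 1 ≤ t → xl t =
      (∑ i ∈ Finset.Icc 1 (M t), w i t)⁻¹ •
        ∑ i ∈ Finset.Icc 1 (M t), w i t • xe i t) :
    ∀ T : ℕ, 1 ≤ T → ∀ i : ℕ, 1 ≤ i → i ≤ M T →
      ∑ t ∈ Finset.Icc (τ i) T, (ℓ (xl t) (y t) - ℓ (xe i t) (y t))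
        ≤ (1/η) * Real.log ((∑ j ∈ Finset.Icc 1 (M T), π j) / π i) := by
  set L : ℕ → ℝ := fun t => ∑ s ∈ Finset.Icc 1 t, ℓ (xl s) (y s) with hLdef
  set W : ℕ → ℝ := fun t => ∑ j ∈ Finset.Icc 1 (M t), w j t with hWdef
  -- positivity of weights
  have hpos : ∀ t, 1 ≤ t → ∀ i, 1 ≤ i → i ≤ M t → 0 < w i t := by
    intro t
    induction t with
    | zero => omega
    | succ t ih =>
      intro _ i hi1 hi2
      rcases Nat.eq_zero_or_pos t with h0 | h0
      · subst h0
        rw [hw1 i hi1 hi2]; exact hπpos i hi1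
      · by_cases hc : i ≤ M t
        · rw [hwupd t h0 i hi1 hc]
          exact mul_pos (ih h0 i hi1 hc) (Real.exp_pos _)
        · rw [hwnew t h0 i (by omega) hi2]
          exact mul_pos (hπpos i hi1) (Real.exp_pos _)
  have hWpos : ∀ t, 1 ≤ t → 0 < W t := by
    intro t ht
    apply Finset.sum_pos
    · intro j hj
      rw [Finset.mem_Icc] at hj
      exact hpos t ht j hj.1 hj.2
    · exact ⟨1, Finset.mem_Icc.2 ⟨le_refl 1, hMpos t ht⟩⟩
  -- L-splitting: L t = L (t-1) + loss at t, for t ≥ 1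
  have hLsplit : ∀ t : ℕ, 1 ≤ t → L t = L (t-1) + ℓ (xl t) (y t) := by
    intro t ht
    obtain ⟨s, rfl⟩ : ∃ s, t = s + 1 := ⟨t - 1, by omega⟩
    simp only [hLdef, Nat.add_sub_cancel]
    exact Finset.sum_Icc_succ_top (by omega) _
  -- one-step potential inequality
  have hC : ∀ t, 1 ≤ t → ∑ j ∈ Finset.Icc 1 (M t), w j (t+1)
      ≤ W t * Real.exp (-η * ℓ (xl t) (y t)) := by
    intro t ht
    have hN : 1 ≤ M t := hMpos t ht
    have hWt := hWpos t ht
    have hmem : ∀ j : Fin (M t), xe (j + 1) t ∈ X := by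
      intro j
      exact hxe (j + 1) t ht (Nat.le_add_left 1 j) (by omega)
    have hvn : ∀ j : Fin (M t), 0 ≤ w (j + 1) t / W t := by
      intro j
      exact div_nonneg (hpos t ht (j+1) (Nat.le_add_left 1 j) (by omega)).le hWt.le
    have hvs : (∑ j : Fin (M t), w (j + 1) t / W t) = 1 := by
      rw [← Finset.sum_div, ← sum_Icc_one_fin (M t) (fun j => w j t)]
      exact div_self hWt.ne'
    have key := hexp (y t) (M t) hN (fun j => xe (j+1) t) hmem
      (fun j => w (j+1) t / W t) hvn hvs
    have hxeq : (∑ j : Fin (M t), (w (j+1) t / W t) • xe (j+1) t) = xl t := by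
      rw [hxl t ht, Finset.smul_sum,
        sum_Icc_one_fin (M t) (fun j => (∑ i ∈ Finset.Icc 1 (M t), w i t)⁻¹ • w j t • xe j t)]
      apply Finset.sum_congr rfl
      intro j _
      show (w (j+1) t / W t) • xe (j+1) t = (W t)⁻¹ • w (j+1) t • xe (j+1) t
      rw [div_eq_inv_mul, mul_smul]
    rw [show (∑ j : Fin (M t), (w (j+1) t / W t) • xe (j+1) t) = xl t from hxeq] at key
    set S := ∑ j ∈ Finset.Icc 1 (M t), w j t * Real.exp (-η * ℓ (xe j t) (y t)) with hS
    have hfs : (∑ j : Fin (M t), (w (j+1) t / W t) * Real.exp (-η * ℓ (xe (j+1) t) (y t)))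
        = S / W t := by
      rw [hS, sum_Icc_one_fin (M t) (fun j => w j t * Real.exp (-η * ℓ (xe j t) (y t))),
        Finset.sum_div]
      apply Finset.sum_congr rfl
      intro j _
      ring
    rw [hfs] at key
    have hSpos : 0 < S := by
      apply Finset.sum_pos
      · intro j hj
        rw [Finset.mem_Icc] at hj
        exact mul_pos (hpos t ht j hj.1 hj.2) (Real.exp_pos _)
      · exact ⟨1, Finset.mem_Icc.2 ⟨le_refl 1, hN⟩⟩
    have hSW : 0 < S / W t := div_pos hSpos hWt
    have h1 : η * ℓ (xl t) (y t) ≤ -Real.log (S / W t) := by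
      have h := mul_le_mul_of_nonneg_left key hη.le
      calc η * ℓ (xl t) (y t) ≤ η * (-(1/η) * Real.log (S / W t)) := h
        _ = -Real.log (S / W t) := by field_simp
    have h2 : S / W t ≤ Real.exp (-η * ℓ (xl t) (y t)) := by
      rw [← Real.log_le_iff_le_exp hSW]; linarith
    have h3 : S ≤ Real.exp (-η * ℓ (xl t) (y t)) * W t := (div_le_iff₀ hWt).mp h2
    have hsum : ∑ j ∈ Finset.Icc 1 (M t), w j (t+1) = S := by
      apply Finset.sum_congr rfl
      intro j hj
      rw [Finset.mem_Icc] at hj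
      exact hwupd t ht j hj.1 hj.2
    rw [hsum, mul_comm]
    exact h3
  -- potential induction: exp(η L(t-1)) * W t ≤ ∑ π
  have hD : ∀ t, 1 ≤ t → Real.exp (η * L (t-1)) * W t ≤ ∑ j ∈ Finset.Icc 1 (M t), π j := by
    intro t
    induction t with
    | zero => omega
    | succ t ih =>
      intro _
      rcases Nat.eq_zero_or_pos t with h0 | h0
      · subst h0
        have hL0 : L 0 = 0 := by simp [hLdef]
        have hW1 : W 1 = ∑ j ∈ Finset.Icc 1 (M 1), π j := by
          apply Finset.sum_congr rfl
          intro j hj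
          rw [Finset.mem_Icc] at hj
          exact hw1 j hj.1 hj.2
        simp [hL0, hW1]
      · simp only [Nat.add_sub_cancel]
        -- split W (t+1) over old and new experts
        have hMle : M t ≤ M (t+1) := hMmono (Nat.le_succ t)
        have hsplit : W (t+1) = (∑ j ∈ Finset.Icc 1 (M t), w j (t+1))
            + ∑ j ∈ Finset.Ioc (M t) (M (t+1)), w j (t+1) := by
          rw [hWdef]
          simp only []
          rw [show Finset.Icc 1 (M (t+1)) = Finset.Ioc 0 (M (t+1)) from Finset.Icc_add_one_left_eq_Ioc 0 _,
            show Finset.Icc 1 (M t) = Finset.Ioc 0 (M t) from Finset.Icc_add_one_left_eq_Ioc 0 _]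
          exact (Finset.sum_Ioc_consecutive _ (Nat.zero_le _) hMle).symm
        have hnew : ∑ j ∈ Finset.Ioc (M t) (M (t+1)), w j (t+1)
            = (∑ j ∈ Finset.Ioc (M t) (M (t+1)), π j) * Real.exp (-η * L t) := by
          rw [Finset.sum_mul]
          apply Finset.sum_congr rfl
          intro j hj
          rw [Finset.mem_Ioc] at hj
          exact hwnew t h0 j hj.1 hj.2
        have hLt : L t = L (t-1) + ℓ (xl t) (y t) := hLsplit t h0
        have hexppos : (0:ℝ) < Real.exp (η * L t) := Real.exp_pos _
        have hCt := hC t h0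
        have hnewpi : 0 ≤ ∑ j ∈ Finset.Ioc (M t) (M (t+1)), π j := by
          apply Finset.sum_nonneg
          intro j hj
          rw [Finset.mem_Ioc] at hj
          exact (hπpos j (by have := hMpos t h0; omega)).le
        calc Real.exp (η * L t) * W (t + 1)
            = Real.exp (η * L t) * (∑ j ∈ Finset.Icc 1 (M t), w j (t+1))
              + Real.exp (η * L t) * ((∑ j ∈ Finset.Ioc (M t) (M (t+1)), π j)
                * Real.exp (-η * L t)) := by rw [hsplit, hnew]; ring
          _ ≤ Real.exp (η * L t) * (W t * Real.exp (-η * ℓ (xl t) (y t)))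
              + (∑ j ∈ Finset.Ioc (M t) (M (t+1)), π j) := by
              apply add_le_add
              · exact mul_le_mul_of_nonneg_left hCt (Real.exp_pos _).le
              · rw [show Real.exp (η * L t) * ((∑ j ∈ Finset.Ioc (M t) (M (t+1)), π j)
                    * Real.exp (-η * L t))
                    = (Real.exp (η * L t) * Real.exp (-η * L t))
                      * ∑ j ∈ Finset.Ioc (M t) (M (t+1)), π j by ring, ← Real.exp_add]
                simp
          _ = Real.exp (η * L (t-1)) * W t
              + (∑ j ∈ Finset.Ioc (M t) (M (t+1)), π j) := by
              rw [hLt]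
              rw [show Real.exp (η * (L (t-1) + ℓ (xl t) (y t))) * (W t * Real.exp (-η * ℓ (xl t) (y t)))
                  = Real.exp (η * (L (t-1) + ℓ (xl t) (y t))) * Real.exp (-η * ℓ (xl t) (y t)) * W t by ring,
                ← Real.exp_add]
              ring_nf
          _ ≤ (∑ j ∈ Finset.Icc 1 (M t), π j)
              + (∑ j ∈ Finset.Ioc (M t) (M (t+1)), π j) := by
              gcongr
              exact ih h0
          _ = ∑ j ∈ Finset.Icc 1 (M (t+1)), π j := by
              rw [show Finset.Icc 1 (M (t+1)) = Finset.Ioc 0 (M (t+1)) from Finset.Icc_add_one_left_eq_Ioc 0 _,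
                show Finset.Icc 1 (M t) = Finset.Ioc 0 (M t) from Finset.Icc_add_one_left_eq_Ioc 0 _]
              exact Finset.sum_Ioc_consecutive _ (Nat.zero_le _) hMle
  -- main argument
  intro T hT i hi1 hi2
  obtain ⟨hτ1, hτ2, hτ3⟩ := hτ i T hi1 hT hi2
  -- weight of expert i after round T
  have hiMt : ∀ t, τ i ≤ t → i ≤ M t := fun t ht => le_trans hτ2 (hMmono ht)
  have hE : ∀ t, τ i ≤ t → w i (t+1)
      = w i (τ i) * Real.exp (-η * ∑ s ∈ Finset.Icc (τ i) t, ℓ (xe i s) (y s)) := by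
    intro t ht
    induction t, ht using Nat.le_induction with
    | base =>
      rw [hwupd (τ i) hτ1 i hi1 hτ2]
      simp
    | succ t ht ih =>
      rw [hwupd (t+1) (by omega) i hi1 (hiMt (t+1) (by omega)), ih,
        Finset.sum_Icc_succ_top (by omega), mul_assoc, ← Real.exp_add]
      ring_nf
  have hstart : w i (τ i) = π i * Real.exp (-η * L (τ i - 1)) := by
    obtain ⟨s, hs⟩ : ∃ s, τ i = s + 1 := ⟨τ i - 1, by omega⟩
    rcases Nat.eq_zero_or_pos s with h0 | h0
    · have h1' : τ i = 1 := by omega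
      have hM1 : i ≤ M 1 := h1' ▸ hτ2
      rw [h1', hw1 i hi1 hM1]
      have hL0 : L 0 = 0 := by simp [hLdef]
      norm_num [hL0]
    · have hgt : M s + 1 ≤ i := by
        by_contra hcon
        push_neg at hcon
        have := (hτ i s hi1 h0 (by omega)).2.2
        omega
      rw [hs, hwnew s h0 i hgt (by rw [← hs]; exact hτ2)]
      rw [show s + 1 - 1 = s from rfl]
  -- combine
  have hwTi : w i (T+1) = π i * Real.exp (-η * L (τ i - 1)
      - η * ∑ s ∈ Finset.Icc (τ i) T, ℓ (xe i s) (y s)) := by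
    rw [hE T hτ3, hstart, mul_assoc, ← Real.exp_add]
    ring_nf
  have hle1 : w i (T+1) ≤ ∑ j ∈ Finset.Icc 1 (M T), w j (T+1) := by
    apply Finset.single_le_sum (f := fun j => w j (T+1))
    · intro j hj
      rw [Finset.mem_Icc] at hj
      exact (hpos (T+1) (by omega) j hj.1 (le_trans hj.2 (hMmono (Nat.le_succ T)))).le
    · exact Finset.mem_Icc.2 ⟨hi1, hi2⟩
  have hle2 := hC T hT
  have hDT := hD T hT
  have hLTsplit : L T = L (T-1) + ℓ (xl T) (y T) := hLsplit T hT
  -- regret sum splitting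
  have hlsum : L (τ i - 1) + ∑ t ∈ Finset.Icc (τ i) T, ℓ (xl t) (y t) = L T := by
    simp only [hLdef]
    rw [show Finset.Icc 1 (τ i - 1) = Finset.Ioc 0 (τ i - 1) from Finset.Icc_add_one_left_eq_Ioc 0 _,
      show Finset.Icc 1 T = Finset.Ioc 0 T from Finset.Icc_add_one_left_eq_Ioc 0 _,
      show Finset.Icc (τ i) T = Finset.Ioc (τ i - 1) T by
        rw [show τ i = (τ i - 1) + 1 by omega]
        exact Finset.Icc_add_one_left_eq_Ioc _ _]
    exact Finset.sum_Ioc_consecutive _ (Nat.zero_le _) (by omega)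
  set R := ∑ t ∈ Finset.Icc (τ i) T, (ℓ (xl t) (y t) - ℓ (xe i t) (y t)) with hR
  have hRsum : R = (∑ t ∈ Finset.Icc (τ i) T, ℓ (xl t) (y t))
      - ∑ t ∈ Finset.Icc (τ i) T, ℓ (xe i t) (y t) := Finset.sum_sub_distrib _ _
  -- key inequality: π i * exp(η R) ≤ ∑ π j
  have hkey : π i * Real.exp (η * R) ≤ ∑ j ∈ Finset.Icc 1 (M T), π j := by
    have hmain : Real.exp (η * L T) * w i (T+1) ≤ ∑ j ∈ Finset.Icc 1 (M T), π j := by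
      calc Real.exp (η * L T) * w i (T+1)
          ≤ Real.exp (η * L T) * (W T * Real.exp (-η * ℓ (xl T) (y T))) := by
            gcongr
            exact le_trans hle1 hle2
        _ = Real.exp (η * L (T-1)) * W T := by
            rw [hLTsplit,
              show Real.exp (η * (L (T-1) + ℓ (xl T) (y T))) * (W T * Real.exp (-η * ℓ (xl T) (y T)))
                = Real.exp (η * (L (T-1) + ℓ (xl T) (y T))) * Real.exp (-η * ℓ (xl T) (y T)) * W T by ring,
              ← Real.exp_add]
            ring_nf
        _ ≤ ∑ j ∈ Finset.Icc 1 (M T), π j := hDT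
    have heq : Real.exp (η * L T) * w i (T+1) = π i * Real.exp (η * R) := by
      rw [hwTi, hRsum,
        show Real.exp (η * L T) * (π i * Real.exp (-η * L (τ i - 1)
          - η * ∑ s ∈ Finset.Icc (τ i) T, ℓ (xe i s) (y s)))
          = π i * (Real.exp (η * L T) * Real.exp (-η * L (τ i - 1)
          - η * ∑ s ∈ Finset.Icc (τ i) T, ℓ (xe i s) (y s))) by ring,
        ← Real.exp_add]
      congr 2
      have : L T = L (τ i - 1) + ∑ t ∈ Finset.Icc (τ i) T, ℓ (xl t) (y t) := hlsum.symm
      rw [this]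
      ring
    rw [← heq]
    exact hmain
  -- conclude
  have hπi := hπpos i hi1
  have hSpos : (0:ℝ) < ∑ j ∈ Finset.Icc 1 (M T), π j := by
    apply Finset.sum_pos
    · intro j hj
      rw [Finset.mem_Icc] at hj
      exact hπpos j hj.1
    · exact ⟨1, Finset.mem_Icc.2 ⟨le_refl 1, hMpos T hT⟩⟩
  have hexpR : Real.exp (η * R) ≤ (∑ j ∈ Finset.Icc 1 (M T), π j) / π i := by
    rw [le_div_iff₀ hπi]
    linarith [hkey]
  have hlogR : η * R ≤ Real.log ((∑ j ∈ Finset.Icc 1 (M T), π j) / π i) := by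
    calc η * R = Real.log (Real.exp (η * R)) := (Real.log_exp _).symm
      _ ≤ Real.log ((∑ j ∈ Finset.Icc 1 (M T), π j) / π i) :=
          Real.log_le_log (Real.exp_pos _) hexpR
  calc R = (1/η) * (η * R) := by field_simp
    _ ≤ (1/η) * Real.log ((∑ j ∈ Finset.Icc 1 (M T), π j) / π i) := by
        apply mul_le_mul_of_nonneg_left hlogR
        positivity
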